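/- Let A be an N×N Hermitian matrix with eigenvalues λ⁽⁰⁾ ≥ ⋯ ≥ λ⁽ᴺ⁻¹⁾. Suppose A = UU* + L + E where U is an N×K matrix with orthonormal columns, L is Hermitian with rank(L) = r, and E is Hermitian with ‖E‖ ≤ ε. Then the number of indices ℓ with ε < λ⁽ℓ⁾ < 1 − ε is at most 2r. -/

import Mathlib

open Matrix

/-- The ℓ2 → ℓ2 operator (spectral) norm of a matrix. -/
noncomputable def opNorm {𝕜 : Type*} [RCLike 𝕜] {m n : ℕ} (M : Matrix (Fin m) (Fin n) 𝕜) : ℝ :=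
  ‖LinearMap.toContinuousLinearMap (Matrix.toEuclideanLin M)‖

lemma coordSub {N : ℕ} (p : Fin N → Prop) [DecidablePred p] :
    ∃ C : Submodule ℂ (Fin N → ℂ), Module.finrank ℂ C = (Finset.univ.filter p).card ∧
      ∀ c ∈ C, ∀ ℓ, ¬ p ℓ → c ℓ = 0 := by
  classical
  refine ⟨Submodule.span ℂ (Set.range fun ℓ : {ℓ : Fin N // p ℓ} =>
      (Pi.single (ℓ : Fin N) (1:ℂ) : Fin N → ℂ)), ?_, ?_⟩
  · have hli : LinearIndependent ℂ (fun ℓ : {ℓ : Fin N // p ℓ} =>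
        (Pi.single (ℓ : Fin N) (1:ℂ) : Fin N → ℂ)) := by
      have h2 := (Pi.basisFun ℂ (Fin N)).linearIndependent.comp
        (fun ℓ : {ℓ : Fin N // p ℓ} => (ℓ : Fin N)) Subtype.val_injective
      convert h2 using 1
      funext ℓ
      simp [Pi.basisFun_apply]
    rw [finrank_span_eq_card hli]
    simp [Fintype.card_subtype]
  · intro c hc ℓ hℓ
    have hsp : Submodule.span ℂ (Set.range fun ℓ' : {ℓ : Fin N // p ℓ} =>
        (Pi.single (ℓ' : Fin N) (1:ℂ) : Fin N → ℂ))
        ≤ LinearMap.ker (LinearMap.proj ℓ : (Fin N → ℂ) →ₗ[ℂ] ℂ) := by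
      rw [Submodule.span_le]
      rintro - ⟨ℓ', rfl⟩
      simp only [SetLike.mem_coe, LinearMap.mem_ker, LinearMap.proj_apply]
      refine Pi.single_eq_of_ne (fun h => hℓ ?_) 1
      rw [h]; exact ℓ'.2
    exact hsp hc

lemma qre {N : ℕ} (x : Fin N → ℂ) : (star x ⬝ᵥ x).re = ∑ i, Complex.normSq (x i) := by
  simp [dotProduct, Complex.re_sum, Complex.normSq_apply, Complex.mul_re]

lemma qpos {N : ℕ} (x : Fin N → ℂ) (hx : x ≠ 0) : 0 < (star x ⬝ᵥ x).re := by
  rw [qre]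
  obtain ⟨i, hi⟩ : ∃ i, x i ≠ 0 := by
    by_contra h; push_neg at h; exact hx (funext h)
  exact Finset.sum_pos' (fun j _ => Complex.normSq_nonneg _)
    ⟨i, Finset.mem_univ i, Complex.normSq_pos.mpr hi⟩

lemma Ebound {N : ℕ} (E : Matrix (Fin N) (Fin N) ℂ) (ε : ℝ) (hE : opNorm E ≤ ε)
    (x : Fin N → ℂ) : |(star x ⬝ᵥ (E *ᵥ x)).re| ≤ ε * (star x ⬝ᵥ x).re := by
  set x' : EuclideanSpace ℂ (Fin N) := (WithLp.equiv 2 (Fin N → ℂ)).symm x with hx'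
  have h1 : (inner ℂ x' (Matrix.toEuclideanLin E x') : ℂ) = star x ⬝ᵥ (E *ᵥ x) := by
    rw [EuclideanSpace.inner_eq_star_dotProduct, dotProduct_comm]; rfl
  have h2 : ((inner ℂ x' x' : ℂ)).re = (star x ⬝ᵥ x).re := by
    rw [EuclideanSpace.inner_eq_star_dotProduct, dotProduct_comm]; rfl
  rw [← h1, ← h2]
  have hre : |(inner ℂ x' (Matrix.toEuclideanLin E x') : ℂ).re|
      ≤ ‖(inner ℂ x' (Matrix.toEuclideanLin E x') : ℂ)‖ := Complex.abs_re_le_norm _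
  refine hre.trans ?_
  have h3 : ‖(inner ℂ x' (Matrix.toEuclideanLin E x') : ℂ)‖ ≤ ‖x'‖ * ‖Matrix.toEuclideanLin E x'‖ :=
    norm_inner_le_norm _ _
  have h4 : ‖Matrix.toEuclideanLin E x'‖ ≤ opNorm E * ‖x'‖ := by
    have h := (LinearMap.toContinuousLinearMap (Matrix.toEuclideanLin E)).le_opNorm x'
    rwa [LinearMap.coe_toContinuousLinearMap'] at h
  have h5 : (inner ℂ x' x' : ℂ).re = ‖x'‖ ^ 2 := by
    exact_mod_cast inner_self_eq_norm_sq (𝕜 := ℂ) x'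
  rw [h5]
  calc ‖(inner ℂ x' (Matrix.toEuclideanLin E x') : ℂ)‖ ≤ ‖x'‖ * (opNorm E * ‖x'‖) :=
        h3.trans (by gcongr)
    _ ≤ ‖x'‖ * (ε * ‖x'‖) := by gcongr
    _ = ε * ‖x'‖ ^ 2 := by ring

theorem stmt0 {N K : ℕ} (A : Matrix (Fin N) (Fin N) ℂ) (hA : A.IsHermitian)
    (μ : Fin N → ℝ) (hmono : Antitone μ)
    (V : Matrix (Fin N) (Fin N) ℂ) (hV : V ∈ Matrix.unitaryGroup (Fin N) ℂ)
    (hdiag : A = V * Matrix.diagonal (fun i => (μ i : ℂ)) * Vᴴ)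
    (U : Matrix (Fin N) (Fin K) ℂ) (hU : Uᴴ * U = 1)
    (L E : Matrix (Fin N) (Fin N) ℂ) (hL : L.IsHermitian) (hE : E.IsHermitian)
    (r : ℕ) (hr : L.rank = r)
    (ε : ℝ) (hε : 0 < ε) (hEnorm : opNorm E ≤ ε)
    (hsum : A = U * Uᴴ + L + E) :
    (Finset.univ.filter fun ℓ : Fin N => ε < μ ℓ ∧ μ ℓ < 1 - ε).card ≤ 2 * r := by
  classical
  by_cases hhalf : ε < 1 - ε
  swap
  · have hempty : (Finset.univ.filter fun ℓ : Fin N => ε < μ ℓ ∧ μ ℓ < 1 - ε) = ∅ := by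
      refine Finset.filter_eq_empty_iff.mpr ?_
      rintro ℓ - ⟨h1, h2⟩
      exact hhalf (h1.trans h2)
    rw [hempty]
    simp
  -- unitary facts
  have hVV : Vᴴ * V = 1 := Matrix.mem_unitaryGroup_iff'.mp hV
  have hVV' : V * Vᴴ = 1 := Matrix.mem_unitaryGroup_iff.mp hV
  set D : Matrix (Fin N) (Fin N) ℂ := Matrix.diagonal (fun i => (μ i : ℂ)) with hD
  have hAV : A * V = V * D := by
    rw [hdiag, mul_assoc, hVV, mul_one]
  -- the linear equivalence given by V
  set e : (Fin N → ℂ) ≃ₗ[ℂ] (Fin N → ℂ) := LinearEquiv.ofLinear V.mulVecLin Vᴴ.mulVecLin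
    (by rw [← Matrix.mulVecLin_mul, hVV', Matrix.mulVecLin_one])
    (by rw [← Matrix.mulVecLin_mul, hVV, Matrix.mulVecLin_one]) with he
  have he_apply : ∀ c, e.toLinearMap c = V *ᵥ c := fun c => rfl
  -- quadratic form computations
  have hq2 : ∀ c : Fin N → ℂ, star (V *ᵥ c) ⬝ᵥ (V *ᵥ c) = star c ⬝ᵥ c := by
    intro c
    rw [Matrix.star_mulVec, Matrix.dotProduct_mulVec, Matrix.vecMul_vecMul, hVV,
      Matrix.vecMul_one]
  have hq1 : ∀ c : Fin N → ℂ, star (V *ᵥ c) ⬝ᵥ (A *ᵥ (V *ᵥ c)) = star c ⬝ᵥ (D *ᵥ c) := by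
    intro c
    rw [Matrix.mulVec_mulVec, hAV, ← Matrix.mulVec_mulVec, Matrix.star_mulVec,
      Matrix.dotProduct_mulVec, Matrix.vecMul_vecMul, hVV, Matrix.vecMul_one]
  have hDsum : ∀ c : Fin N → ℂ,
      (star c ⬝ᵥ (D *ᵥ c)).re = ∑ ℓ, μ ℓ * Complex.normSq (c ℓ) := by
    intro c
    simp only [dotProduct, Pi.star_apply, Complex.re_sum]
    refine Finset.sum_congr rfl fun ℓ _ => ?_
    rw [Matrix.mulVec_diagonal]
    have hz : (starRingEnd ℂ) (c ℓ) * ((μ ℓ : ℂ) * c ℓ)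
        = (μ ℓ : ℂ) * ((starRingEnd ℂ) (c ℓ) * c ℓ) := by ring
    rw [show star (c ℓ) = (starRingEnd ℂ) (c ℓ) from rfl, hz,
      ← Complex.normSq_eq_conj_mul_self]
    push_cast
    simp
  -- the matrix B
  set B : Matrix (Fin N) (Fin N) ℂ := U * Uᴴ + L with hB
  have hsum' : A = B + E := by rw [hB, hsum]
  -- submodules
  set X : Submodule ℂ (Fin N → ℂ) :=
    LinearMap.range U.mulVecLin ⊓ LinearMap.ker L.mulVecLin with hX
  set Y : Submodule ℂ (Fin N → ℂ) :=
    LinearMap.ker (Uᴴ).mulVecLin ⊓ LinearMap.ker L.mulVecLin with hY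
  have hBX : ∀ x ∈ X, B *ᵥ x = x := by
    rintro x hx
    obtain ⟨⟨y, rfl⟩, hker⟩ := Submodule.mem_inf.mp hx
    have hker' : L *ᵥ U.mulVecLin y = 0 := hker
    rw [Matrix.mulVecLin_apply] at hker' ⊢
    rw [hB, Matrix.add_mulVec, hker', add_zero, Matrix.mulVec_mulVec, Matrix.mul_assoc, hU, Matrix.mul_one]
  have hBY : ∀ x ∈ Y, B *ᵥ x = 0 := by
    rintro x hx
    obtain ⟨hk1, hk2⟩ := Submodule.mem_inf.mp hx
    have hk1' : Uᴴ *ᵥ x = 0 := hk1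
    have hk2' : L *ᵥ x = 0 := hk2
    rw [hB, Matrix.add_mulVec, hk2', add_zero, ← Matrix.mulVec_mulVec, hk1', Matrix.mulVec_zero]
  -- coordinate subspaces
  obtain ⟨Cp, hCpdim, hCpmem⟩ := coordSub (fun ℓ : Fin N => μ ℓ < 1 - ε)
  obtain ⟨Cm, hCmdim, hCmmem⟩ := coordSub (fun ℓ : Fin N => ε < μ ℓ)
  set Wp : Submodule ℂ (Fin N → ℂ) := Cp.map e.toLinearMap with hWp
  set Wm : Submodule ℂ (Fin N → ℂ) := Cm.map e.toLinearMap with hWm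
  -- strict quadratic bounds on Wp, Wm
  have hWpQ : ∀ x ∈ Wp, x ≠ 0 →
      (star x ⬝ᵥ (A *ᵥ x)).re < (1 - ε) * (star x ⬝ᵥ x).re := by
    rintro x hx hx0
    obtain ⟨c, hc, rfl⟩ := Submodule.mem_map.mp hx
    rw [he_apply] at hx0 ⊢
    have hc0 : c ≠ 0 := by
      rintro rfl
      exact hx0 (by simp [Matrix.mulVec_zero])
    obtain ⟨ℓ₀, hℓ₀⟩ : ∃ ℓ, c ℓ ≠ 0 := by
      by_contra h; push_neg at h; exact hc0 (funext h)
    have hℓ₀p : μ ℓ₀ < 1 - ε := by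
      by_contra h; exact hℓ₀ (hCpmem c hc ℓ₀ h)
    rw [hq1, hq2, hDsum, qre, Finset.mul_sum]
    refine Finset.sum_lt_sum (fun ℓ _ => ?_) ⟨ℓ₀, Finset.mem_univ _, ?_⟩
    · by_cases hcl : c ℓ = 0
      · simp [hcl]
      · have hp : μ ℓ < 1 - ε := by
          by_contra h; exact hcl (hCpmem c hc ℓ h)
        have := Complex.normSq_nonneg (c ℓ)
        nlinarith
    · have := Complex.normSq_pos.mpr hℓ₀
      nlinarith
  have hWmQ : ∀ x ∈ Wm, x ≠ 0 →
      ε * (star x ⬝ᵥ x).re < (star x ⬝ᵥ (A *ᵥ x)).re := by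
    rintro x hx hx0
    obtain ⟨c, hc, rfl⟩ := Submodule.mem_map.mp hx
    rw [he_apply] at hx0 ⊢
    have hc0 : c ≠ 0 := by
      rintro rfl
      exact hx0 (by simp [Matrix.mulVec_zero])
    obtain ⟨ℓ₀, hℓ₀⟩ : ∃ ℓ, c ℓ ≠ 0 := by
      by_contra h; push_neg at h; exact hc0 (funext h)
    have hℓ₀p : ε < μ ℓ₀ := by
      by_contra h; exact hℓ₀ (hCmmem c hc ℓ₀ h)
    rw [hq1, hq2, hDsum, qre, Finset.mul_sum]
    refine Finset.sum_lt_sum (fun ℓ _ => ?_) ⟨ℓ₀, Finset.mem_univ _, ?_⟩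
    · by_cases hcl : c ℓ = 0
      · simp [hcl]
      · have hp : ε < μ ℓ := by
          by_contra h; exact hcl (hCmmem c hc ℓ h)
        have := Complex.normSq_nonneg (c ℓ)
        nlinarith
    · have := Complex.normSq_pos.mpr hℓ₀
      nlinarith
  -- disjointness
  have hWpX : Wp ⊓ X = ⊥ := by
    rw [Submodule.eq_bot_iff]
    intro x hx
    obtain ⟨hxW, hxX⟩ := Submodule.mem_inf.mp hx
    by_contra hx0
    have h1 := hWpQ x hxW hx0
    have hAx : A *ᵥ x = x + E *ᵥ x := by
      rw [hsum', Matrix.add_mulVec, hBX x hxX]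
    have h2 : (star x ⬝ᵥ (A *ᵥ x)).re
        = (star x ⬝ᵥ x).re + (star x ⬝ᵥ (E *ᵥ x)).re := by
      rw [hAx, dotProduct_add, Complex.add_re]
    have h3 := Ebound E ε hEnorm x
    have h4 := abs_le.mp h3
    linarith
  have hWmY : Wm ⊓ Y = ⊥ := by
    rw [Submodule.eq_bot_iff]
    intro x hx
    obtain ⟨hxW, hxY⟩ := Submodule.mem_inf.mp hx
    by_contra hx0
    have h1 := hWmQ x hxW hx0
    have hAx : A *ᵥ x = E *ᵥ x := by
      rw [hsum', Matrix.add_mulVec, hBY x hxY, zero_add]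
    have h2 : (star x ⬝ᵥ (A *ᵥ x)).re = (star x ⬝ᵥ (E *ᵥ x)).re := by rw [hAx]
    have h3 := Ebound E ε hEnorm x
    have h4 := abs_le.mp h3
    linarith
  -- dimension counting
  have htop : Module.finrank ℂ (Fin N → ℂ) = N := Module.finrank_fin_fun ℂ
  have hWpdim : Module.finrank ℂ Wp
      = (Finset.univ.filter fun ℓ : Fin N => μ ℓ < 1 - ε).card := by
    rw [hWp, LinearEquiv.finrank_map_eq, hCpdim]
  have hWmdim : Module.finrank ℂ Wm
      = (Finset.univ.filter fun ℓ : Fin N => ε < μ ℓ).card := by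
    rw [hWm, LinearEquiv.finrank_map_eq, hCmdim]
  have f1 : Module.finrank ℂ Wp + Module.finrank ℂ X ≤ N := by
    have h := Submodule.finrank_sup_add_finrank_inf_eq Wp X
    rw [hWpX, finrank_bot] at h
    have hle := Submodule.finrank_le (Wp ⊔ X)
    rw [htop] at hle
    omega
  have f2 : Module.finrank ℂ Wm + Module.finrank ℂ Y ≤ N := by
    have h := Submodule.finrank_sup_add_finrank_inf_eq Wm Y
    rw [hWmY, finrank_bot] at h
    have hle := Submodule.finrank_le (Wm ⊔ Y)
    rw [htop] at hle
    omega
  -- ranks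
  have hUinj : Function.Injective U.mulVecLin := by
    have hleft : Function.LeftInverse (Uᴴ).mulVecLin U.mulVecLin := by
      intro y
      have : (Uᴴ * U).mulVecLin y = y := by rw [hU, Matrix.mulVecLin_one]; rfl
      rwa [Matrix.mulVecLin_mul] at this
    exact hleft.injective
  have hrangeU : Module.finrank ℂ (LinearMap.range U.mulVecLin) = K := by
    rw [LinearMap.finrank_range_of_inj hUinj, Module.finrank_fin_fun]
  have hkerL : Module.finrank ℂ (LinearMap.ker L.mulVecLin) + r = N := by
    have h := LinearMap.finrank_range_add_finrank_ker L.mulVecLin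
    have hrk : Module.finrank ℂ (LinearMap.range L.mulVecLin) = r := by
      rw [← hr]; rfl
    rw [hrk, htop] at h
    omega
  have hrankUH : Module.finrank ℂ (LinearMap.range (Uᴴ).mulVecLin) = K := by
    have h1 : (Uᴴ).rank = U.rank := by
      open ComplexOrder in exact Matrix.rank_conjTranspose U
    have h2 : U.rank = K := by
      have : U.rank = Module.finrank ℂ (LinearMap.range U.mulVecLin) := rfl
      rw [this, hrangeU]
    have h3 : (Uᴴ).rank = Module.finrank ℂ (LinearMap.range (Uᴴ).mulVecLin) := rfl
    rw [← h3, h1, h2]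
  have hkerUH : Module.finrank ℂ (LinearMap.ker (Uᴴ).mulVecLin) + K = N := by
    have h := LinearMap.finrank_range_add_finrank_ker (Uᴴ).mulVecLin
    rw [hrankUH, htop] at h
    omega
  have fX : Module.finrank ℂ X + N ≥ K + Module.finrank ℂ (LinearMap.ker L.mulVecLin) := by
    have h := Submodule.finrank_sup_add_finrank_inf_eq
      (LinearMap.range U.mulVecLin) (LinearMap.ker L.mulVecLin)
    have hle := Submodule.finrank_le (LinearMap.range U.mulVecLin ⊔ LinearMap.ker L.mulVecLin)
    rw [htop] at hle
    rw [hrangeU] at h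
    rw [hX]
    omega
  have fY : Module.finrank ℂ Y + N
      ≥ Module.finrank ℂ (LinearMap.ker (Uᴴ).mulVecLin)
        + Module.finrank ℂ (LinearMap.ker L.mulVecLin) := by
    have h := Submodule.finrank_sup_add_finrank_inf_eq
      (LinearMap.ker (Uᴴ).mulVecLin) (LinearMap.ker L.mulVecLin)
    have hle := Submodule.finrank_le (LinearMap.ker (Uᴴ).mulVecLin ⊔ LinearMap.ker L.mulVecLin)
    rw [htop] at hle
    rw [hY]
    omega
  -- card arithmetic
  have hfilter : (Finset.univ.filter fun ℓ : Fin N => ε < μ ℓ ∧ μ ℓ < 1 - ε)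
      = (Finset.univ.filter fun ℓ : Fin N => ε < μ ℓ)
        ∩ (Finset.univ.filter fun ℓ : Fin N => μ ℓ < 1 - ε) := by
    ext ℓ
    simp [Finset.mem_filter, Finset.mem_inter]
  have hunion : (Finset.univ.filter fun ℓ : Fin N => ε < μ ℓ)
      ∪ (Finset.univ.filter fun ℓ : Fin N => μ ℓ < 1 - ε) = Finset.univ := by
    ext ℓ
    simp only [Finset.mem_union, Finset.mem_filter, Finset.mem_univ, true_and, iff_true]
    rcases lt_or_ge (μ ℓ) (1 - ε) with h | h
    · right; exact h
    · left; linarith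
  have hcu := Finset.card_union_add_card_inter
    (Finset.univ.filter fun ℓ : Fin N => ε < μ ℓ)
    (Finset.univ.filter fun ℓ : Fin N => μ ℓ < 1 - ε)
  rw [hunion, Finset.card_univ, Fintype.card_fin] at hcu
  rw [hfilter]
  omega
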